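/- Let S = {0 = s_0 < s_1 < … < s_k} be a finite tight set of nonnegative reals and let (A, ⊑, ≺) be a finite linearly ordered poset. On the set A^k of tuples (a_0, a_1, …, a_{k-1}) with entries in A, define d(ā, b̄) = s_j where j = min{p ∈ {0, 1, …, k-1} : for all i ≤ k - 1 - p, a_i ⊑ b_{i+p} and b_i ⊑ a_{i+p}} (with min ∅ = k), and define ā ≺_lex b̄ iff there exists j with a_j ≺ b_j and a_i = b_i for all i < j. Then (A^k, d, ≺_lex) is a finite linearly ordered metric space all of whose distances lie in S. -/

import Mathlib

/-- A finite set `T = {0 = t_0 < t_1 < … < t_ℓ}` of nonnegative reals (presented by the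
strictly increasing enumeration `t : Fin (ℓ+1) → ℝ`) is tight if `t_{i+j} ≤ t_i + t_j`
whenever `0 ≤ i ≤ j ≤ i + j ≤ ℓ`. -/
def Tight (l : ℕ) (t : Fin (l + 1) → ℝ) : Prop :=
  ∀ i j : ℕ, i ≤ j → ∀ h : i + j ≤ l,
    t ⟨i + j, by omega⟩ ≤ t ⟨i, by omega⟩ + t ⟨j, by omega⟩

/-- `dIdxM le a b` is the least `p` such that `a_i ⊑ b_{i+p}` and `b_i ⊑ a_{i+p}` for all
`i ≤ k - 1 - p` (for tuples `a b : Fin k → A`); it equals `k` when no `p < k` works. -/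
noncomputable def dIdxM {A : Type} (le : A → A → Prop) {k : ℕ} (a b : Fin k → A) : ℕ :=
  sInf {p : ℕ | ∀ (i : Fin k) (h : (i : ℕ) + p < k),
    le (a i) (b ⟨(i : ℕ) + p, h⟩) ∧ le (b i) (a ⟨(i : ℕ) + p, h⟩)}

theorem dIdxM_le {A : Type} (le : A → A → Prop) {k : ℕ} (a b : Fin k → A) :
    dIdxM le a b ≤ k :=
  Nat.sInf_le fun _ h => absurd h (by omega)

/-- The metric on tuples: `d(ā, b̄) = s_j` where
`j = min{p : a_i ⊑ b_{i+p} and b_i ⊑ a_{i+p} for all i ≤ k - 1 - p}` (with `min ∅ = k`). -/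
noncomputable def dMet {A : Type} (le : A → A → Prop) {k : ℕ} (s : Fin (k + 1) → ℝ)
    (a b : Fin k → A) : ℝ :=
  s ⟨dIdxM le a b, Nat.lt_succ_of_le (dIdxM_le le a b)⟩

/-- The lexicographic order on tuples induced by a strict order `lt` on `A`:
`ā ≺_lex b̄` iff there is a `j` with `a j ≺ b j` and `a i = b i` for all `i < j`. -/
def LexLt {A : Type} (lt : A → A → Prop) {k : ℕ} (a b : Fin k → A) : Prop :=
  ∃ j : Fin k, lt (a j) (b j) ∧ ∀ i : Fin k, i < j → a i = b i

/-- The defining set of indices for `dIdxM`. -/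
def DSet {A : Type} (le : A → A → Prop) {k : ℕ} (a b : Fin k → A) : Set ℕ :=
  {p : ℕ | ∀ (i : Fin k) (h : (i : ℕ) + p < k),
    le (a i) (b ⟨(i : ℕ) + p, h⟩) ∧ le (b i) (a ⟨(i : ℕ) + p, h⟩)}

lemma dIdxM_eq_sInf {A : Type} (le : A → A → Prop) {k : ℕ} (a b : Fin k → A) :
    dIdxM le a b = sInf (DSet le a b) := rfl

lemma DSet_nonempty {A : Type} (le : A → A → Prop) {k : ℕ} (a b : Fin k → A) :
    (DSet le a b).Nonempty := ⟨k, fun _ h => absurd h (by omega)⟩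

lemma dIdxM_mem {A : Type} (le : A → A → Prop) {k : ℕ} (a b : Fin k → A) :
    dIdxM le a b ∈ DSet le a b := Nat.sInf_mem (DSet_nonempty le a b)

lemma DSet_symm {A : Type} (le : A → A → Prop) {k : ℕ} (a b : Fin k → A) :
    DSet le a b = DSet le b a := by
  ext p; exact ⟨fun h i hi => (h i hi).symm, fun h i hi => (h i hi).symm⟩

lemma tight_aux {k : ℕ} {s : Fin (k + 1) → ℝ} (hs : StrictMono s) (htight : Tight k s)
    {p q r : ℕ} (hle : p ≤ q) (hq : q ≤ k) (hr : r ≤ k) (hpq : r ≤ p + q) :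
    s ⟨r, by omega⟩ ≤ s ⟨p, by omega⟩ + s ⟨q, by omega⟩ := by
  by_cases h : p + q ≤ k
  · calc s ⟨r, by omega⟩ ≤ s ⟨p + q, by omega⟩ := hs.monotone (Fin.mk_le_mk.mpr hpq)
      _ ≤ _ := htight p q hle h
  · push_neg at h
    have h1 : k - q ≤ q := by omega
    have h2 : (k - q) + q ≤ k := by omega
    have ht := htight (k - q) q h1 h2
    have e : (⟨k - q + q, by omega⟩ : Fin (k + 1)) = ⟨k, by omega⟩ := by
      apply Fin.ext; simp; omega
    rw [e] at ht
    calc s ⟨r, by omega⟩ ≤ s ⟨k, by omega⟩ := hs.monotone (Fin.mk_le_mk.mpr hr)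
      _ ≤ s ⟨k - q, by omega⟩ + s ⟨q, by omega⟩ := ht
      _ ≤ s ⟨p, by omega⟩ + s ⟨q, by omega⟩ :=
        add_le_add_left (hs.monotone (Fin.mk_le_mk.mpr (by omega))) _

lemma tight_bound {k : ℕ} {s : Fin (k + 1) → ℝ} (hs : StrictMono s) (htight : Tight k s)
    {p q r : ℕ} (hp : p ≤ k) (hq : q ≤ k) (hr : r ≤ k) (hpq : r ≤ p + q) :
    s ⟨r, by omega⟩ ≤ s ⟨p, by omega⟩ + s ⟨q, by omega⟩ := by
  rcases le_total p q with h | h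
  · exact tight_aux hs htight h hq hr hpq
  · have := tight_aux hs htight h hp hr (by omega); linarith

theorem powerPoset_is_ordMetric
    (k : ℕ) (s : Fin (k + 1) → ℝ) (hs0 : s 0 = 0) (hs : StrictMono s)
    (htight : Tight k s)
    (A : Type) (hA : Finite A)
    (le : A → A → Prop)
    (le_refl : ∀ a, le a a)
    (le_antisymm : ∀ a b, le a b → le b a → a = b)
    (le_trans : ∀ a b c, le a b → le b c → le a c)
    (lt : A → A → Prop)
    (lt_irrefl : ∀ a, ¬ lt a a)
    (lt_trans : ∀ a b c, lt a b → lt b c → lt a c)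
    (lt_total : ∀ a b, lt a b ∨ a = b ∨ lt b a)
    (lt_extends : ∀ a b, le a b → a ≠ b → lt a b) :
    -- d is a metric
    (∀ a : Fin k → A, dMet le s a a = 0) ∧
    (∀ a b : Fin k → A, dMet le s a b = 0 → a = b) ∧
    (∀ a b : Fin k → A, dMet le s a b = dMet le s b a) ∧
    (∀ a b c : Fin k → A, dMet le s a c ≤ dMet le s a b + dMet le s b c) ∧
    -- ≺_lex is a strict linear order
    (∀ a : Fin k → A, ¬ LexLt lt a a) ∧
    (∀ a b c : Fin k → A, LexLt lt a b → LexLt lt b c → LexLt lt a c) ∧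
    (∀ a b : Fin k → A, LexLt lt a b ∨ a = b ∨ LexLt lt b a) ∧
    -- all distances lie in S
    (∀ a b : Fin k → A, dMet le s a b ∈ Set.range s) := by
  classical
  have hidx0 : ∀ a : Fin k → A, dIdxM le a a = 0 := by
    intro a
    refine Nat.eq_zero_of_le_zero (Nat.sInf_le ?_)
    intro i h
    have e : (⟨(i : ℕ) + 0, h⟩ : Fin k) = i := by apply Fin.ext; simp
    rw [e]; exact ⟨le_refl _, le_refl _⟩
  have hidx_symm : ∀ a b : Fin k → A, dIdxM le a b = dIdxM le b a := by
    intro a b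
    rw [dIdxM_eq_sInf, dIdxM_eq_sInf, DSet_symm]
  refine ⟨?_, ?_, ?_, ?_, ?_, ?_, ?_, ?_⟩
  · intro a
    rw [dMet]
    have : (⟨dIdxM le a a, Nat.lt_succ_of_le (dIdxM_le le a a)⟩ : Fin (k + 1)) = 0 := by
      apply Fin.ext; simp [hidx0 a]
    rw [this, hs0]
  · intro a b h
    rw [dMet, ← hs0] at h
    have h0 : (⟨dIdxM le a b, Nat.lt_succ_of_le (dIdxM_le le a b)⟩ : Fin (k + 1)) = 0 :=
      hs.injective h
    have h0' : dIdxM le a b = 0 := by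
      have := congrArg Fin.val h0; simpa using this
    have hm := dIdxM_mem le a b
    rw [h0'] at hm
    funext i
    have hi : (i : ℕ) + 0 < k := by omega
    have e : (⟨(i : ℕ) + 0, hi⟩ : Fin k) = i := by apply Fin.ext; simp
    have := hm i hi
    rw [e] at this
    exact le_antisymm _ _ this.1 this.2
  · intro a b
    rw [dMet, dMet]
    congr 1
    apply Fin.ext
    simp [hidx_symm a b]
  · intro a b c
    have hp := dIdxM_mem le a b
    have hq := dIdxM_mem le b c
    set p := dIdxM le a b with hpd
    set q := dIdxM le b c with hqd
    have htri : dIdxM le a c ≤ p + q := by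
      apply Nat.sInf_le
      intro i h
      have h1 : (i : ℕ) + p < k := by omega
      have h2 : ((⟨(i : ℕ) + p, h1⟩ : Fin k) : ℕ) + q < k := by simp; omega
      have e : (⟨((⟨(i : ℕ) + p, h1⟩ : Fin k) : ℕ) + q, h2⟩ : Fin k)
          = ⟨(i : ℕ) + (p + q), h⟩ := by apply Fin.ext; simp; omega
      have hab := hp i h1
      have hbc := hq ⟨(i : ℕ) + p, h1⟩ h2
      rw [e] at hbc
      have h1' : (i : ℕ) + q < k := by omega
      have h2' : ((⟨(i : ℕ) + q, h1'⟩ : Fin k) : ℕ) + p < k := by simp; omega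
      have e' : (⟨((⟨(i : ℕ) + q, h1'⟩ : Fin k) : ℕ) + p, h2'⟩ : Fin k)
          = ⟨(i : ℕ) + (p + q), h⟩ := by apply Fin.ext; simp; omega
      have hcb := hq i h1'
      have hba := hp ⟨(i : ℕ) + q, h1'⟩ h2'
      rw [e'] at hba
      exact ⟨le_trans _ _ _ hab.1 hbc.1, le_trans _ _ _ hcb.2 hba.2⟩
    rw [dMet, dMet, dMet]
    exact tight_bound hs htight (dIdxM_le le a b) (dIdxM_le le b c) (dIdxM_le le a c) htri
  · rintro a ⟨j, hj, -⟩
    exact lt_irrefl _ hj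
  · rintro a b c ⟨j, hj, hjlt⟩ ⟨j', hj', hjlt'⟩
    rcases lt_trichotomy j j' with h | h | h
    · refine ⟨j, ?_, fun i hi => (hjlt i hi).trans (hjlt' i (hi.trans h))⟩
      rw [← hjlt' j h]; exact hj
    · subst h
      exact ⟨j, lt_trans _ _ _ hj hj', fun i hi => (hjlt i hi).trans (hjlt' i hi)⟩
    · refine ⟨j', ?_, fun i hi => (hjlt i (hi.trans h)).trans (hjlt' i hi)⟩
      rw [hjlt j' h]; exact hj'
  · intro a b
    by_cases hab : a = b
    · exact Or.inr (Or.inl hab)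
    · have hne : ∃ j : Fin k, a j ≠ b j := by
        by_contra h; push_neg at h; exact hab (funext h)
      obtain ⟨j0, hj0⟩ := hne
      obtain ⟨j, hjmem, hjmin⟩ := Finset.exists_min_image
        (Finset.univ.filter (fun j : Fin k => a j ≠ b j)) id
        ⟨j0, by simp [hj0]⟩
      simp only [Finset.mem_filter, Finset.mem_univ, true_and] at hjmem
      have hmin : ∀ i : Fin k, i < j → a i = b i := by
        intro i hi
        by_contra hne'
        have := hjmin i (by simp [hne'])
        simp at this; omega
      rcases lt_total (a j) (b j) with h | h | h
      · exact Or.inl ⟨j, h, hmin⟩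
      · exact absurd h hjmem
      · exact Or.inr (Or.inr ⟨j, h, fun i hi => (hmin i hi).symm⟩)
  · intro a b
    exact ⟨_, rfl⟩
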